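/- A dataset (p^t,x^t)_{t≤T} satisfies GARP if and only if TMP_c = 0, where TMP_c is the supremum of ∑_t p^t·(x^t - x^{σ(t)}) over all constrained permutations σ (those satisfying p^t·x^t ≥ p^t·x^{σ(t)} for all t). -/

import Mathlib

open Matrix BigOperators

/-- GARP: along any cyclic revealed-preference sequence, none of the revealed-preference
inequalities is strict. -/
def GARP {L T : ℕ} (p x : Fin T → Fin L → ℝ) : Prop :=
  ∀ (K : ℕ) (t : Fin (K + 1) → Fin T), t 0 = t (Fin.last K) →
    (∀ k : Fin K, p (t k.castSucc) ⬝ᵥ x (t k.succ) ≤ p (t k.castSucc) ⬝ᵥ x (t k.castSucc)) →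
    ∀ k : Fin K, p (t k.castSucc) ⬝ᵥ x (t k.succ) = p (t k.castSucc) ⬝ᵥ x (t k.castSucc)

private lemma cycle_to_perm {L T : ℕ} (p x : Fin T → Fin L → ℝ) :
    ∀ K : ℕ, ∀ f : ℕ → Fin T, f K = f 0 →
    (∀ k, k < K → p (f k) ⬝ᵥ x (f (k+1)) ≤ p (f k) ⬝ᵥ x (f k)) →
    (∃ k, k < K ∧ p (f k) ⬝ᵥ x (f (k+1)) < p (f k) ⬝ᵥ x (f k)) →
    ∃ σ : Equiv.Perm (Fin T), (∀ t, p t ⬝ᵥ x (σ t) ≤ p t ⬝ᵥ x t) ∧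
      0 < ∑ t, (p t ⬝ᵥ x t - p t ⬝ᵥ x (σ t)) := by
  intro K
  induction K using Nat.strong_induction_on with
  | _ K ih =>
  rintro f hcyc hle ⟨k₀, hk₀, hstrict⟩
  by_cases hinj : ∀ i j, i < K → j < K → f i = f j → i = j
  · -- injective case: build the cyclic permutation from the list
    set l : List (Fin T) := (List.range K).map f with hl
    have hlen : l.length = K := by simp [hl]
    have hnd : l.Nodup := by
      refine List.Nodup.map_on ?_ List.nodup_range
      intro a ha b hb hab
      exact hinj a b (List.mem_range.mp ha) (List.mem_range.mp hb) hab
    have hget : ∀ m (h : m < K), l[m]'(by omega) = f m := by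
      intro m h; simp [hl]
    have happly : ∀ m, m < K → l.formPerm (f m) = f (m + 1) := by
      intro m hm
      have h1 : l.formPerm (l[m]'(by omega)) = l[(m+1) % l.length]'(by
          exact Nat.mod_lt _ (by omega)) :=
        List.formPerm_apply_getElem l hnd m (by omega)
      rw [hget m hm] at h1
      rw [h1, hget _ (by rw [hlen]; exact Nat.mod_lt _ (by omega))]
      rw [hlen]
      rcases Nat.lt_or_ge (m+1) K with h | h
      · rw [Nat.mod_eq_of_lt h]
      · have hmK : m + 1 = K := by omega
        rw [hmK, Nat.mod_self, ← hcyc]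
    have hcon : ∀ t, p t ⬝ᵥ x (l.formPerm t) ≤ p t ⬝ᵥ x t := by
      intro t
      by_cases ht : t ∈ l
      · obtain ⟨m, hm, rfl⟩ : ∃ m, m < K ∧ f m = t := by
          simpa [hl, List.mem_map, List.mem_range] using ht
        rw [happly m hm]
        exact hle m hm
      · rw [List.formPerm_apply_of_notMem ht]
    refine ⟨l.formPerm, hcon, ?_⟩
    refine Finset.sum_pos' (fun t _ => sub_nonneg.mpr (hcon t)) ⟨f k₀, Finset.mem_univ _, ?_⟩
    rw [happly k₀ hk₀]
    exact sub_pos.mpr hstrict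
  · push_neg at hinj
    obtain ⟨i, j, hi, hj, hij, hne⟩ := hinj
    wlog hlt : i < j generalizing i j
    · exact this j i hj hi hij.symm hne.symm (by omega)
    by_cases hmid : i ≤ k₀ ∧ k₀ < j
    · -- inner cycle
      refine ih (j - i) (by omega) (fun k => f (i + k)) ?_ ?_ ⟨k₀ - i, by omega, ?_⟩
      · show f (i + (j - i)) = f (i + 0)
        rw [show i + (j - i) = j by omega, show i + 0 = i by omega]
        exact hij.symm
      · intro k hk
        show p (f (i + k)) ⬝ᵥ x (f (i + (k + 1))) ≤ p (f (i + k)) ⬝ᵥ x (f (i + k))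
        rw [show i + (k + 1) = (i + k) + 1 by omega]
        exact hle (i + k) (by omega)
      · show p (f (i + (k₀ - i))) ⬝ᵥ x (f (i + (k₀ - i + 1))) <
          p (f (i + (k₀ - i))) ⬝ᵥ x (f (i + (k₀ - i)))
        rw [show i + (k₀ - i) = k₀ by omega, show i + (k₀ - i + 1) = k₀ + 1 by omega]
        exact hstrict
    · -- outer cycle
      set g : ℕ → Fin T := fun k => if k ≤ i then f k else f (k + (j - i)) with hg
      set K' := K - (j - i) with hK'
      have hiK' : i < K' := by omega
      have hgle : ∀ m, m ≤ i → g m = f m := fun m hm => if_pos hm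
      have hggt : ∀ m, i < m → g m = f (m + (j - i)) := fun m hm => if_neg (by omega)
      refine ih K' (by omega) g ?_ ?_ ⟨if k₀ < i then k₀ else k₀ - (j - i), by split <;> omega, ?_⟩
      · rw [hggt K' (by omega), hgle 0 (Nat.zero_le i), show K' + (j - i) = K by omega, hcyc]
      · intro k hk
        rcases Nat.lt_trichotomy k i with h | h | h
        · rw [hgle k (by omega), hgle (k+1) (by omega)]
          exact hle k (by omega)
        · rw [hgle k (by omega), hggt (k+1) (by omega), h, hij,
            show i + 1 + (j - i) = j + 1 by omega]
          exact hle j (by omega)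
        · rw [hggt k h, hggt (k+1) (by omega), show k + 1 + (j - i) = (k + (j - i)) + 1 by omega]
          exact hle (k + (j - i)) (by omega)
      · have hcase : k₀ < i ∨ j ≤ k₀ := by omega
        rcases hcase with hc | hc
        · rw [if_pos hc, hgle k₀ (by omega), hgle (k₀+1) (by omega)]
          exact hstrict
        · rw [if_neg (by omega)]
          rcases Nat.eq_or_lt_of_le hc with h | h
          · rw [hgle (k₀ - (j - i)) (by omega), hggt (k₀ - (j - i) + 1) (by omega),
              show k₀ - (j - i) = i by omega, hij,
              show i + 1 + (j - i) = j + 1 by omega, h]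
            exact hstrict
          · rw [hggt (k₀ - (j - i)) (by omega), hggt (k₀ - (j - i) + 1) (by omega),
              show k₀ - (j - i) + (j - i) = k₀ by omega,
              show k₀ - (j - i) + 1 + (j - i) = k₀ + 1 by omega]
            exact hstrict

/-- GARP holds iff the constrained total money pump `TMP_c` is zero. -/
theorem garp_iff_constrained_tmp_zero
    {L T : ℕ} (p x : Fin T → Fin L → ℝ)
    (hp : ∀ t i, 0 < p t i) (hx : ∀ t i, 0 ≤ x t i) :
    GARP p x ↔
      sSup {v : ℝ | ∃ σ : Equiv.Perm (Fin T),
        (∀ t, p t ⬝ᵥ x (σ t) ≤ p t ⬝ᵥ x t) ∧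
        v = ∑ t, (p t ⬝ᵥ x t - p t ⬝ᵥ x (σ t))} = 0 := by
  set S : Set ℝ := {v : ℝ | ∃ σ : Equiv.Perm (Fin T),
        (∀ t, p t ⬝ᵥ x (σ t) ≤ p t ⬝ᵥ x t) ∧
        v = ∑ t, (p t ⬝ᵥ x t - p t ⬝ᵥ x (σ t))} with hS
  have h0 : (0 : ℝ) ∈ S := by
    refine ⟨Equiv.refl _, fun t => le_refl _, ?_⟩
    simp
  constructor
  · intro hgarp
    have hSeq : S = {0} := by
      apply Set.eq_singleton_iff_unique_mem.mpr
      refine ⟨h0, ?_⟩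
      rintro v ⟨σ, hσ, rfl⟩
      apply Finset.sum_eq_zero
      intro t₀ _
      rw [sub_eq_zero]
      -- follow the orbit of t₀ under σ for orderOf σ steps
      set K := orderOf σ with hK
      have hKpos : 0 < K := orderOf_pos σ
      have key := hgarp K (fun k => (σ ^ (k : ℕ)) t₀) ?_ ?_ ⟨0, hKpos⟩
      · have h1 : ((⟨0, hKpos⟩ : Fin K).castSucc : Fin (K+1)).val = 0 := rfl
        have h2 : ((⟨0, hKpos⟩ : Fin K).succ : Fin (K+1)).val = 1 := rfl
        simp only [h1, h2, pow_zero, pow_one, Equiv.Perm.one_apply] at key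
        exact key.symm
      · show (σ ^ ((0 : Fin (K+1)) : ℕ)) t₀ = (σ ^ ((Fin.last K : Fin (K+1)) : ℕ)) t₀
        rw [Fin.val_zero, Fin.val_last, pow_zero, hK, pow_orderOf_eq_one]
      · intro k
        show p ((σ ^ ((k.castSucc : Fin (K+1)) : ℕ)) t₀) ⬝ᵥ x ((σ ^ ((k.succ : Fin (K+1)) : ℕ)) t₀) ≤
          p ((σ ^ ((k.castSucc : Fin (K+1)) : ℕ)) t₀) ⬝ᵥ x ((σ ^ ((k.castSucc : Fin (K+1)) : ℕ)) t₀)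
        rw [Fin.coe_castSucc, Fin.val_succ, pow_succ', Equiv.Perm.mul_apply]
        exact hσ _
    rw [hSeq]
    exact csSup_singleton 0
  · intro hsup
    by_contra hgarp
    unfold GARP at hgarp
    push_neg at hgarp
    obtain ⟨K, t, hcyc, hle, k₁, hne⟩ := hgarp
    set f : ℕ → Fin T := fun n => if h : n < K + 1 then t ⟨n, h⟩ else t 0 with hf
    have hfval : ∀ n (h : n < K + 1), f n = t ⟨n, h⟩ := fun n h => dif_pos h
    have hcyc' : f K = f 0 := by
      rw [hfval K (by omega), hfval 0 (by omega)]
      rw [show (⟨K, by omega⟩ : Fin (K+1)) = Fin.last K from rfl, ← hcyc]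
      rfl
    have hle' : ∀ k, k < K → p (f k) ⬝ᵥ x (f (k+1)) ≤ p (f k) ⬝ᵥ x (f k) := by
      intro k hk
      rw [hfval k (by omega), hfval (k+1) (by omega)]
      exact hle ⟨k, hk⟩
    have hstrict' : p (f (k₁ : ℕ)) ⬝ᵥ x (f ((k₁ : ℕ) + 1)) < p (f (k₁ : ℕ)) ⬝ᵥ x (f (k₁ : ℕ)) := by
      rw [hfval (k₁ : ℕ) (by omega), hfval ((k₁ : ℕ)+1) (by omega)]
      exact lt_of_le_of_ne (hle k₁) hne
    obtain ⟨σ, hσ, hpos⟩ := cycle_to_perm p x K f hcyc' hle' ⟨k₁, k₁.isLt, hstrict'⟩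
    have hfin : S.Finite := by
      apply Set.Finite.subset (Set.finite_range
        (fun σ : Equiv.Perm (Fin T) => ∑ t, (p t ⬝ᵥ x t - p t ⬝ᵥ x (σ t))))
      rintro v ⟨σ', _, rfl⟩
      exact ⟨σ', rfl⟩
    have hbdd : BddAbove S := hfin.bddAbove
    have : (0 : ℝ) < sSup S := lt_of_lt_of_le hpos (le_csSup hbdd ⟨σ, hσ, rfl⟩)
    exact absurd hsup this.ne'
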